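/- Let S be a nonempty set, U ⊆ S, and suppose each d_p (p ∈ S) satisfies (d1), (d2) and (d3). Then T^U(N) = inf { d_p(N) | p ∈ U } satisfies (d2): for every short exact sequence 0 → K → L → N → 0, if T^U(L) > T^U(N) then T^U(K) = T^U(N) + 1. -/

import Mathlib

universe u v

/-- A `d`-function: assigns to every `Λ`-module a value in `ℕ ∪ {∞}`. -/
abbrev DFun (Λ : Type u) [Ring Λ] :=
  (N : Type u) → [AddCommGroup N] → [Module Λ N] → ℕ∞

/-- Condition (d1): if `d L > d K` then `d K = d N + 1`. -/
def CondD1 (Λ : Type u) [Ring Λ] (d : DFun Λ) : Prop :=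
  ∀ (K L N : Type u) [AddCommGroup K] [Module Λ K] [AddCommGroup L] [Module Λ L]
    [AddCommGroup N] [Module Λ N] (f : K →ₗ[Λ] L) (g : L →ₗ[Λ] N),
    Function.Injective f → Function.Surjective g →
    LinearMap.range f = LinearMap.ker g →
    d K < d L → d K = d N + 1

/-- Condition (d2): if `d L > d N` then `d K = d N + 1`. -/
def CondD2 (Λ : Type u) [Ring Λ] (d : DFun Λ) : Prop :=
  ∀ (K L N : Type u) [AddCommGroup K] [Module Λ K] [AddCommGroup L] [Module Λ L]
    [AddCommGroup N] [Module Λ N] (f : K →ₗ[Λ] L) (g : L →ₗ[Λ] N),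
    Function.Injective f → Function.Surjective g →
    LinearMap.range f = LinearMap.ker g →
    d N < d L → d K = d N + 1

/-- Condition (d3): if `d L < d N` then `d K ≤ d L`. -/
def CondD3 (Λ : Type u) [Ring Λ] (d : DFun Λ) : Prop :=
  ∀ (K L N : Type u) [AddCommGroup K] [Module Λ K] [AddCommGroup L] [Module Λ L]
    [AddCommGroup N] [Module Λ N] (f : K →ₗ[Λ] L) (g : L →ₗ[Λ] N),
    Function.Injective f → Function.Surjective g →
    LinearMap.range f = LinearMap.ker g →
    d L < d N → d K ≤ d L

/-- `T^U(N) = inf { d_p(N) | p ∈ U }` (infimum over the empty set is `∞`). -/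
noncomputable def TU (Λ : Type u) [Ring Λ] {S : Type v} (d : S → DFun Λ)
    (U : Set S) (N : Type u) [AddCommGroup N] [Module Λ N] : ℕ∞ :=
  ⨅ p : U, d p N

/-- If each `d_p` satisfies (d1), (d2) and (d3), then `T^U` satisfies (d2). -/
theorem stmt9 (Λ : Type u) [Ring Λ] (S : Type v) [Nonempty S] (U : Set S)
    (d : S → DFun Λ)
    (hd1 : ∀ p : S, CondD1 Λ (d p)) (hd2 : ∀ p : S, CondD2 Λ (d p))
    (hd3 : ∀ p : S, CondD3 Λ (d p)) :
    CondD2 Λ (fun N _ _ => TU Λ d U N) := by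
  intro K L N _ _ _ _ _ _ f g hf hg hfg hlt
  simp only at hlt ⊢
  have htop : TU Λ d U N ≠ ⊤ := ne_top_of_lt hlt
  have h1 : TU Λ d U N + 1 ≤ TU Λ d U L := Order.add_one_le_of_lt hlt
  have hlt1 : TU Λ d U N < TU Λ d U N + 1 := (ENat.lt_add_one_iff htop).mpr le_rfl
  obtain ⟨p, hp⟩ := iInf_lt_iff.mp hlt1
  have hpN : d p N ≤ TU Λ d U N := (ENat.lt_add_one_iff htop).mp hp
  have hpL : d p N < d p L :=
    lt_of_lt_of_le (lt_of_le_of_lt hpN hlt) (iInf_le (fun q : U => d q L) p)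
  have hK : d p K = d p N + 1 := hd2 p K L N f g hf hg hfg hpL
  refine le_antisymm ?_ ?_
  · calc TU Λ d U K ≤ d p K := iInf_le _ p
      _ = d p N + 1 := hK
      _ ≤ TU Λ d U N + 1 := add_le_add_left hpN 1
  · refine le_iInf fun q => ?_
    rcases lt_or_ge (d q K) (d q L) with h | h
    · rw [hd1 q K L N f g hf hg hfg h]
      exact add_le_add_left (iInf_le (fun r : U => d r N) q) 1
    · exact h1.trans ((iInf_le (fun r : U => d r L) q).trans h)
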